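/- arXiv:2003.04863 — 5 statements merged into one kernel-verified Lean document; each statement's English description precedes it below -/
import Mathlib

section
/- For all real x, δ and every real p ≥ 2, one has 2^{-O(p)}·(|x|^{p-2}·δ² + |δ|^p) ≤ |x+δ|^p - |x|^p - p·|x|^{p-1}·sign(x)·δ ≤ 2^{O(p)}·(|x|^{p-2}·δ² + |δ|^p). Concretely: there exist constants c, C > 0 such that for all p ≥ 2 and all x, δ ∈ ℝ, c^p·(|x|^{p-2}δ² + |δ|^p) ≤ |x+δ|^p - |x|^p - p|x|^{p-1}sign(x)δ ≤ C^p·(|x|^{p-2}δ² + |δ|^p). -/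
open Real Filter

-- superadditivity of rpow
lemma rpow_superadd {a b q : ℝ} (ha : 0 ≤ a) (hb : 0 ≤ b) (hq : 1 ≤ q) :
    a ^ q + b ^ q ≤ (a + b) ^ q := by
  have hab : 0 ≤ a + b := by linarith
  have key : ∀ c : ℝ, 0 ≤ c → c ≤ a + b → c ^ q ≤ c * (a + b) ^ (q - 1) := by
    intro c hc hcab
    rcases eq_or_lt_of_le hc with h | h
    · rw [← h, Real.zero_rpow (by linarith), zero_mul]
    · calc c ^ q = c ^ (1 + (q - 1)) := by ring_nf
        _ = c ^ (1:ℝ) * c ^ (q - 1) := Real.rpow_add h 1 (q-1)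
        _ = c * c ^ (q - 1) := by rw [Real.rpow_one]
        _ ≤ c * (a + b) ^ (q - 1) := by
            exact mul_le_mul_of_nonneg_left (Real.rpow_le_rpow hc hcab (by linarith)) hc
  rcases eq_or_lt_of_le hab with h | h
  · have ha0 : a = 0 := by linarith [hb, ha]
    have hb0 : b = 0 := by linarith
    simp [ha0, hb0, Real.zero_rpow (show q ≠ 0 by linarith)]
  · calc a ^ q + b ^ q ≤ a * (a+b)^(q-1) + b * (a+b)^(q-1) :=
        add_le_add (key a ha (by linarith)) (key b hb (by linarith))
      _ = (a + b) * (a+b)^(q-1) := by ring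
      _ = (a + b) ^ (q - 1) * (a+b) := by ring
      _ = (a + b) ^ ((q-1) + 1) := (Real.rpow_add_one (by linarith) _).symm
      _ = (a + b) ^ q := by ring_nf

-- two point Jensen
lemma jensen2 {s t q : ℝ} (hs : 0 ≤ s) (ht : 0 ≤ t) (hq : 1 ≤ q) :
    2 * ((s + t) / 2) ^ q ≤ s ^ q + t ^ q := by
  have h := (convexOn_rpow hq).2 (Set.mem_Ici.2 hs) (Set.mem_Ici.2 ht)
    (by norm_num : (0:ℝ) ≤ 1/2) (by norm_num : (0:ℝ) ≤ 1/2) (by norm_num)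
  simp only [smul_eq_mul] at h
  have e : (1/2 : ℝ) * s + (1/2:ℝ) * t = (s+t)/2 := by ring
  rw [e] at h
  linarith

lemma sq_as_rpow (u : ℝ) : |u| ^ (2:ℝ) = u ^ 2 := by
  rw [show (2:ℝ) = ((2:ℕ):ℝ) by norm_num, Real.rpow_natCast, sq_abs]

-- |u|^p = (u^2)^(p/2)
lemma abs_rpow_eq_sq_rpow {p : ℝ} (hp : 0 ≤ p) (u : ℝ) : |u| ^ p = (u ^ 2) ^ (p/2) := by
  rw [← sq_abs u, ← Real.rpow_natCast |u| 2, ← Real.rpow_mul (abs_nonneg u)]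
  norm_num
  rw [show 2 * (p/2) = p by ring]

lemma clarkson {p : ℝ} (hp : 2 ≤ p) (A B : ℝ) :
    2 * (|A| ^ p + |B| ^ p) ≤ |A + B| ^ p + |A - B| ^ p := by
  have hq : 1 ≤ p / 2 := by linarith
  have h1 : 2 * ((((A+B)^2) + ((A-B)^2)) / 2) ^ (p/2) ≤ ((A+B)^2)^(p/2) + ((A-B)^2)^(p/2) :=
    jensen2 (by positivity) (by positivity) hq
  have e1 : (((A+B)^2) + ((A-B)^2)) / 2 = A^2 + B^2 := by ring
  rw [e1] at h1
  have h2 : (A^2)^(p/2) + (B^2)^(p/2) ≤ (A^2 + B^2)^(p/2) :=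
    rpow_superadd (by positivity) (by positivity) hq
  rw [abs_rpow_eq_sq_rpow (by linarith) A, abs_rpow_eq_sq_rpow (by linarith) B,
    abs_rpow_eq_sq_rpow (by linarith) (A+B), abs_rpow_eq_sq_rpow (by linarith) (A-B)]
  linarith

section W2
variable {p : ℝ}

lemma cont_psi {q : ℝ} (hq : 0 ≤ q) : Continuous fun u : ℝ => u * |u| ^ q := by
  have h : Continuous fun u : ℝ => |u| ^ q := by
    rw [continuous_iff_continuousAt]
    intro u
    exact (Real.continuousAt_rpow_const _ _ (Or.inr hq)).comp continuous_abs.continuousAt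
  exact continuous_id.mul h

-- FTC representation
lemma E_rep (hp : 2 ≤ p) (x δ : ℝ) :
    |x + δ| ^ p - |x| ^ p - p * (x * |x| ^ (p-2)) * δ =
      ∫ t in (0:ℝ)..1, (p * ((x + t*δ) * |x + t*δ| ^ (p-2)) - p * (x * |x| ^ (p-2))) * δ := by
  have hp1 : (1:ℝ) < p := by linarith
  have haff : ∀ t : ℝ, HasDerivAt (fun s : ℝ => x + s * δ) δ t := by
    intro t
    simpa using ((hasDerivAt_id t).mul_const δ).const_add x
  have hF : ∀ t ∈ Set.uIcc (0:ℝ) 1,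
      HasDerivAt (fun s : ℝ => |x + s*δ| ^ p) (p * ((x + t*δ) * |x + t*δ| ^ (p-2)) * δ) t := by
    intro t _
    have h := (hasDerivAt_abs_rpow (x + t*δ) hp1).comp t (haff t)
    exact h.congr_deriv (by ring)
  have hcont : Continuous fun t : ℝ => p * ((x + t*δ) * |x + t*δ| ^ (p-2)) * δ := by
    have := (cont_psi (show (0:ℝ) ≤ p - 2 by linarith)).comp
      (continuous_const.add (continuous_id.mul continuous_const) : Continuous fun t : ℝ => x + t*δ)
    exact (continuous_const.mul this).mul continuous_const
  have hint := intervalIntegral.integral_eq_sub_of_hasDerivAt hF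
    (hcont.intervalIntegrable 0 1)
  have hsub : ∫ t in (0:ℝ)..1, (p * ((x + t*δ) * |x + t*δ| ^ (p-2)) - p * (x * |x| ^ (p-2))) * δ
      = (∫ t in (0:ℝ)..1, p * ((x + t*δ) * |x + t*δ| ^ (p-2)) * δ)
        - ∫ t in (0:ℝ)..1, p * (x * |x| ^ (p-2)) * δ := by
    rw [← intervalIntegral.integral_sub (hcont.intervalIntegrable 0 1)
      (intervalIntegrable_const)]
    congr 1
    ext t
    ring
  rw [hsub, hint]
  simp only [intervalIntegral.integral_const, smul_eq_mul]
  ring_nf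
end W2

section W3
variable {p q : ℝ}

-- Bernoulli: lower tangent bound  q*b^(q-1)*(a-b) ≤ a^q - b^q  for 0 < b, 0 ≤ a
lemma rpow_sub_ge (hq : 1 ≤ q) {a b : ℝ} (hb : 0 < b) (ha : 0 ≤ a) :
    q * b ^ (q-1) * (a - b) ≤ a ^ q - b ^ q := by
  have hs : -1 ≤ a / b - 1 := by
    have : 0 ≤ a / b := div_nonneg ha hb.le
    linarith
  have hB := one_add_mul_self_le_rpow_one_add hs hq
  have he : (1 + (a/b - 1)) = a / b := by ring
  rw [he, Real.div_rpow ha hb.le] at hB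
  have hbq : 0 < b ^ q := Real.rpow_pos_of_pos hb q
  have hb1 : b ^ q = b ^ (q-1) * b := by
    rw [show q = (q-1)+1 by ring, Real.rpow_add_one hb.ne']
    ring_nf
  have := mul_le_mul_of_nonneg_left hB hbq.le
  rw [mul_div_assoc'] at this
  rw [mul_div_cancel_left₀ _ hbq.ne'] at this
  -- this : b^q * (1 + q*(a/b-1)) ≤ a^q
  have key : b ^ q * (1 + q * (a/b - 1)) = b ^ q + q * b ^ (q-1) * (a - b) := by
    rw [hb1]; field_simp
  linarith [this, key.symm.trans_le this]
end W3

section W3b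
variable {p q : ℝ}

lemma rpow_sub_le (hq : 1 ≤ q) {a b : ℝ} (hb : 0 ≤ b) (hba : b ≤ a) :
    a ^ q - b ^ q ≤ q * a ^ (q-1) * (a - b) := by
  rcases eq_or_lt_of_le (hb.trans hba) with h | h
  · have hb0 : b = 0 := le_antisymm (hba.trans h.symm.le) hb
    simp [← h, hb0]
  · have := rpow_sub_ge hq h hb (a := b)
    linarith

lemma mul_self_rpow (hp : 2 ≤ p) {c : ℝ} (hc : 0 ≤ c) : c * c ^ (p-2) = c ^ (p-1) := by
  rcases eq_or_lt_of_le hc with h | h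
  · rw [← h, Real.zero_rpow (by linarith : p - (1:ℝ) ≠ 0), zero_mul]
  · rw [show p - 1 = (p-2)+1 by ring, Real.rpow_add_one h.ne']
    ring

lemma psi_diff_le_nonneg (hp : 2 ≤ p) {a b M : ℝ} (hb : 0 ≤ b) (hba : b ≤ a) (haM : a ≤ M) :
    a * a ^ (p-2) - b * b ^ (p-2) ≤ (p-1) * M ^ (p-2) * (a - b) := by
  have ha : 0 ≤ a := hb.trans hba
  rw [mul_self_rpow hp ha, mul_self_rpow hp hb]
  have h1 := rpow_sub_le (show 1 ≤ p - 1 by linarith) hb hba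
  have h2 : a ^ (p-1-1) ≤ M ^ (p-2) := by
    rw [show p-1-1 = p-2 by ring]
    exact Real.rpow_le_rpow ha haM (by linarith)
  calc a ^ (p-1) - b ^ (p-1) ≤ (p-1) * a ^ (p-1-1) * (a-b) := h1
    _ ≤ (p-1) * M ^ (p-2) * (a-b) := by
        apply mul_le_mul_of_nonneg_right _ (by linarith)
        exact mul_le_mul_of_nonneg_left h2 (by linarith)

lemma psi_diff_le (hp : 2 ≤ p) {a b M : ℝ} (haM : |a| ≤ M) (hbM : |b| ≤ M) (hba : b ≤ a) :
    a * |a| ^ (p-2) - b * |b| ^ (p-2) ≤ (p-1) * M ^ (p-2) * (a - b) := by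
  have hM : 0 ≤ M := (abs_nonneg a).trans haM
  rcases le_or_gt 0 b with hb | hb
  · have ha : 0 ≤ a := hb.trans hba
    rw [abs_of_nonneg ha, abs_of_nonneg hb]
    exact psi_diff_le_nonneg hp hb hba ((le_abs_self a).trans haM)
  · rcases le_or_gt a 0 with ha | ha
    · -- both nonpositive
      have h := psi_diff_le_nonneg hp (show (0:ℝ) ≤ -a by linarith)
        (show -a ≤ -b by linarith) ((neg_le_abs b).trans hbM)
      rw [abs_of_nonpos ha, abs_of_neg hb]
      nlinarith [h]
    · -- b < 0 < a
      rw [abs_of_pos ha, abs_of_neg hb]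
      have hMa : a ^ (p-2) ≤ M ^ (p-2) :=
        Real.rpow_le_rpow ha.le ((le_abs_self a).trans haM) (by linarith)
      have hMb : (-b) ^ (p-2) ≤ M ^ (p-2) :=
        Real.rpow_le_rpow (by linarith) ((neg_le_abs b).trans hbM) (by linarith)
      have h1 : a * a ^ (p-2) ≤ a * M ^ (p-2) := mul_le_mul_of_nonneg_left hMa ha.le
      have h2 : (-b) * (-b) ^ (p-2) ≤ (-b) * M ^ (p-2) :=
        mul_le_mul_of_nonneg_left hMb (by linarith)
      have h3 : M ^ (p-2) * (a - b) ≤ (p-1) * M ^ (p-2) * (a-b) := by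
        have : 0 ≤ M ^ (p-2) * (a - b) := by
          apply mul_nonneg (Real.rpow_nonneg hM _) (by linarith)
        nlinarith [this]
      nlinarith [h1, h2, h3]

lemma psi_diff_ge_pos (hp : 2 ≤ p) {a b m : ℝ} (hm : 0 < m) (hma : m ≤ a) (hmb : m ≤ b) :
    (p-1) * m ^ (p-2) * (a-b)^2 ≤ (a * |a| ^ (p-2) - b * |b| ^ (p-2)) * (a - b) := by
  have ha : 0 < a := hm.trans_le hma
  have hb : 0 < b := hm.trans_le hmb
  rw [abs_of_pos ha, abs_of_pos hb, mul_self_rpow hp ha.le, mul_self_rpow hp hb.le]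
  have core : ∀ u v : ℝ, m ≤ u → m ≤ v → v ≤ u →
      (p-1) * m ^ (p-2) * (u-v)^2 ≤ (u ^ (p-1) - v ^ (p-1)) * (u - v) := by
    intro u v hu hv hvu
    have hv0 : 0 < v := hm.trans_le hv
    have h1 := rpow_sub_ge (show 1 ≤ p-1 by linarith) hv0 (hv0.trans_le hvu).le (a := u)
    rw [show p-1-1 = p-2 by ring] at h1
    have h2 : m ^ (p-2) ≤ v ^ (p-2) := Real.rpow_le_rpow hm.le hv (by linarith)
    have h3 : (p-1) * m ^ (p-2) * (u-v) ≤ (p-1) * v ^ (p-2) * (u-v) := by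
      apply mul_le_mul_of_nonneg_right _ (by linarith)
      exact mul_le_mul_of_nonneg_left h2 (by linarith)
    nlinarith [h1, h3]
  rcases le_or_gt b a with h | h
  · exact core a b hma hmb h
  · have := core b a hmb hma h.le
    nlinarith [this]

lemma psi_mono (hp : 2 ≤ p) {a b : ℝ} (hba : b ≤ a) :
    b * |b| ^ (p-2) ≤ a * |a| ^ (p-2) := by
  rcases le_or_gt 0 b with hb | hb
  · have ha : 0 ≤ a := hb.trans hba
    rw [abs_of_nonneg ha, abs_of_nonneg hb, mul_self_rpow hp ha, mul_self_rpow hp hb]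
    exact Real.rpow_le_rpow hb hba (by linarith)
  · rcases le_or_gt a 0 with ha | ha
    · rw [abs_of_nonpos ha, abs_of_neg hb]
      have h2 : (-a) ^ (p-1) ≤ (-b) ^ (p-1) :=
        Real.rpow_le_rpow (by linarith) (by linarith) (by linarith)
      have e1 : b * (-b) ^ (p-2) = -((-b) ^ (p-1)) := by
        rw [← mul_self_rpow hp (show (0:ℝ) ≤ -b by linarith)]; ring
      have e2 : a * (-a) ^ (p-2) = -((-a) ^ (p-1)) := by
        rw [← mul_self_rpow hp (show (0:ℝ) ≤ -a by linarith)]; ring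
      rw [e1, e2]
      linarith
    · have h1 : b * |b| ^ (p-2) ≤ 0 :=
        mul_nonpos_of_nonpos_of_nonneg hb.le (Real.rpow_nonneg (abs_nonneg b) _)
      have h2 : 0 ≤ a * |a| ^ (p-2) :=
        mul_nonneg ha.le (Real.rpow_nonneg (abs_nonneg a) _)
      linarith
end W3b

section W4
variable {p : ℝ}

lemma abs_rpow_split (hp : 2 ≤ p) (δ : ℝ) : |δ| ^ p = |δ| ^ (p-2) * δ^2 := by
  rcases eq_or_ne δ 0 with h | h
  · subst h
    rw [abs_zero, Real.zero_rpow (by linarith : p ≠ 0)]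
    ring
  · have habs : 0 < |δ| := abs_pos.2 h
    conv_lhs => rw [show p = (p-2)+2 by ring]
    rw [Real.rpow_add habs, sq_as_rpow]

lemma E_nonneg (hp : 2 ≤ p) (x δ : ℝ) :
    0 ≤ |x + δ| ^ p - |x| ^ p - p * (x * |x| ^ (p-2)) * δ := by
  rw [E_rep hp x δ]
  apply intervalIntegral.integral_nonneg zero_le_one
  intro t ht
  rcases le_or_gt 0 δ with hδ | hδ
  · have hx : x ≤ x + t*δ := by nlinarith [ht.1]
    have hψ := psi_mono hp hx
    have h1 : 0 ≤ p * ((x+t*δ)*|x+t*δ| ^ (p-2)) - p * (x*|x| ^ (p-2)) := by nlinarith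
    exact mul_nonneg h1 hδ
  · have hx : x + t*δ ≤ x := by nlinarith [ht.1]
    have hψ := psi_mono hp hx
    have h1 : p * ((x+t*δ)*|x+t*δ| ^ (p-2)) - p * (x*|x| ^ (p-2)) ≤ 0 := by nlinarith
    have := mul_nonneg (neg_nonneg.2 h1) (neg_nonneg.2 hδ.le)
    nlinarith [this]

lemma lower_B (hp : 2 ≤ p) (x δ : ℝ) :
    2 ^ (1-p) * |δ| ^ p ≤ |x + δ| ^ p - |x| ^ p - p * (x * |x| ^ (p-2)) * δ := by
  have h1 := E_nonneg hp x (δ/2)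
  have h2 := clarkson hp (x + δ/2) (δ/2)
  rw [show x + δ/2 + δ/2 = x + δ by ring, show x + δ/2 - δ/2 = x by ring] at h2
  have e3 : |δ/2| ^ p = |δ| ^ p / 2 ^ p := by
    rw [show |δ/2| = |δ|/2 by rw [abs_div]; norm_num, Real.div_rpow (abs_nonneg δ) (by norm_num)]
  have e4 : (2:ℝ) ^ (1-p) * |δ| ^ p = 2 * (|δ| ^ p / 2 ^ p) := by
    rw [Real.rpow_sub two_pos, Real.rpow_one]; ring
  rw [e4]
  rw [e3] at h2
  linarith

lemma lower_A (hp : 2 ≤ p) {x δ : ℝ} (hx : 0 < x) (hδ : 2*|δ| ≤ x) :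
    (x/2) ^ (p-2) * δ^2 ≤ |x + δ| ^ p - |x| ^ p - p * (x * |x| ^ (p-2)) * δ := by
  rw [E_rep hp x δ]
  have hm : 0 < x/2 := by linarith
  have hle : ∀ t ∈ Set.Icc (0:ℝ) 1, p*(p-1)*(x/2) ^ (p-2)*δ^2*t ≤
      (p * ((x + t*δ) * |x + t*δ| ^ (p-2)) - p * (x * |x| ^ (p-2))) * δ := by
    intro t ht
    have hδx : |δ| ≤ x/2 := by linarith
    have habs : |t*δ| ≤ x/2 := by
      rw [abs_mul]
      calc |t| * |δ| ≤ 1 * |δ| := by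
            apply mul_le_mul_of_nonneg_right _ (abs_nonneg δ)
            rw [abs_of_nonneg ht.1]; exact ht.2
        _ ≤ x/2 := by linarith
    have ha : x/2 ≤ x + t*δ := by
      have := neg_abs_le (t*δ); linarith
    rcases eq_or_lt_of_le ht.1 with h0 | h0
    · rw [← h0]; norm_num
    · have h9 := psi_diff_ge_pos hp hm ha (show x/2 ≤ x by linarith) (a := x + t*δ) (b := x)
      have h9' := mul_le_mul_of_nonneg_left h9 (show (0:ℝ) ≤ p by linarith)
      refine le_of_mul_le_mul_right ?_ h0
      nlinarith [h9']
  have hcont1 : Continuous fun t : ℝ => p*(p-1)*(x/2) ^ (p-2)*δ^2*t :=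
    continuous_const.mul continuous_id
  have hcont2 : Continuous fun t : ℝ =>
      (p * ((x + t*δ) * |x + t*δ| ^ (p-2)) - p * (x * |x| ^ (p-2))) * δ := by
    have hψ : Continuous fun t : ℝ => (x + t*δ) * |x + t*δ| ^ (p-2) :=
      (cont_psi (show (0:ℝ) ≤ p-2 by linarith)).comp
        (continuous_const.add (continuous_id.mul continuous_const))
    exact ((continuous_const.mul hψ).sub continuous_const).mul continuous_const
  have hIf : IntervalIntegrable (fun t : ℝ => p*(p-1)*(x/2) ^ (p-2)*δ^2*t)
      MeasureTheory.volume 0 1 := hcont1.intervalIntegrable 0 1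
  have hIg : IntervalIntegrable (fun t : ℝ =>
      (p * ((x + t*δ) * |x + t*δ| ^ (p-2)) - p * (x * |x| ^ (p-2))) * δ)
      MeasureTheory.volume 0 1 := hcont2.intervalIntegrable 0 1
  have hmono := intervalIntegral.integral_mono_on zero_le_one hIf hIg hle
  have hval : (∫ t in (0:ℝ)..1, p*(p-1)*(x/2) ^ (p-2)*δ^2*t)
      = p*(p-1)*(x/2) ^ (p-2)*δ^2*(1/2) := by
    rw [intervalIntegral.integral_const_mul, integral_id]
    norm_num
  rw [hval] at hmono
  have hnn : 0 ≤ (x/2) ^ (p-2) * δ^2 := mul_nonneg (Real.rpow_nonneg hm.le _) (sq_nonneg δ)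
  have hfac : (1:ℝ) ≤ p*(p-1)*(1/2) := by nlinarith
  have hstep := mul_le_mul_of_nonneg_left hfac hnn
  linarith [hmono, hstep]

lemma lower_posA (hp : 2 ≤ p) {x δ : ℝ} (hx : 0 < x) (hδ : 2*|δ| ≤ x) :
    (1/4:ℝ) ^ p * (|x| ^ (p-2) * δ^2 + |δ| ^ p) ≤
      |x + δ| ^ p - |x| ^ p - p * (x * |x| ^ (p-2)) * δ := by
  refine le_trans ?_ (lower_A hp hx hδ)
  have habs : |x| = x := abs_of_pos hx
  have hδx : |δ| ≤ x := by have := abs_nonneg δ; linarith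
  have h1 : |δ| ^ p ≤ |x| ^ (p-2) * δ^2 := by
    rw [abs_rpow_split hp δ, habs]
    exact mul_le_mul_of_nonneg_right
      (Real.rpow_le_rpow (abs_nonneg δ) hδx (by linarith)) (sq_nonneg δ)
  have h2 : (x/2) ^ (p-2) = x ^ (p-2) / 2 ^ (p-2) := Real.div_rpow hx.le (by norm_num) _
  have h2p1 : (1:ℝ) ≤ 2 ^ p := by
    calc (1:ℝ) = 2 ^ (0:ℝ) := (Real.rpow_zero 2).symm
      _ ≤ 2 ^ p := Real.rpow_le_rpow_of_exponent_le one_le_two (by linarith)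
  have equarter : ((1/4:ℝ)) ^ p = ((2:ℝ) ^ p)⁻¹ * ((2:ℝ) ^ p)⁻¹ := by
    rw [show (1/4:ℝ) = 2⁻¹ * 2⁻¹ by norm_num,
      Real.mul_rpow (by norm_num) (by norm_num), Real.inv_rpow (by norm_num)]
  have e22 : (2:ℝ) ^ (p-2) = 2 ^ p / 4 := by
    rw [Real.rpow_sub two_pos]; norm_num
  have h2p0 : (0:ℝ) < 2 ^ p := by positivity
  have hcoef : ((1/4:ℝ)) ^ p * 2 ≤ 1 / 2 ^ (p-2) := by
    rw [equarter, e22]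
    rw [show ((2:ℝ) ^ p)⁻¹ * ((2:ℝ) ^ p)⁻¹ * 2 = 2/(2 ^ p * 2 ^ p) by ring,
      show (1:ℝ) / (2 ^ p/4) = 4/2 ^ p by rw [one_div_div],
      div_le_div_iff₀ (by positivity) (by positivity)]
    nlinarith [h2p0, h2p1]
  have hB : 0 ≤ x ^ (p-2) * δ^2 := mul_nonneg (Real.rpow_nonneg hx.le _) (sq_nonneg δ)
  calc (1/4:ℝ) ^ p * (|x| ^ (p-2) * δ^2 + |δ| ^ p)
      ≤ (1/4:ℝ) ^ p * (2 * (x ^ (p-2) * δ^2)) := by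
        apply mul_le_mul_of_nonneg_left _ (by positivity)
        rw [habs] at h1 ⊢
        linarith
    _ = ((1/4:ℝ) ^ p * 2) * (x ^ (p-2) * δ^2) := by ring
    _ ≤ (1 / 2 ^ (p-2)) * (x ^ (p-2) * δ^2) := mul_le_mul_of_nonneg_right hcoef hB
    _ = (x/2) ^ (p-2) * δ^2 := by rw [h2]; ring

lemma psi_diff_sq_le (hp : 2 ≤ p) {a b M : ℝ} (haM : |a| ≤ M) (hbM : |b| ≤ M) :
    (a * |a| ^ (p-2) - b * |b| ^ (p-2)) * (a - b) ≤ (p-1) * M ^ (p-2) * (a-b)^2 := by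
  rcases le_or_gt b a with h | h
  · have := mul_le_mul_of_nonneg_right (psi_diff_le hp haM hbM h) (by linarith : (0:ℝ) ≤ a - b)
    nlinarith [this]
  · have := mul_le_mul_of_nonneg_right (psi_diff_le hp hbM haM h.le) (by linarith : (0:ℝ) ≤ b - a)
    nlinarith [this]

lemma rpow_two_add_le (hq : 0 ≤ p - 2) {a b : ℝ} (ha : 0 ≤ a) (hb : 0 ≤ b) :
    (a + b) ^ (p-2) ≤ 2 ^ (p-2) * (a ^ (p-2) + b ^ (p-2)) := by
  rcases le_total a b with h | h
  · calc (a+b) ^ (p-2) ≤ (2*b) ^ (p-2) := Real.rpow_le_rpow (by linarith) (by linarith) hq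
      _ = 2 ^ (p-2) * b ^ (p-2) := Real.mul_rpow (by norm_num) hb
      _ ≤ 2 ^ (p-2) * (a ^ (p-2) + b ^ (p-2)) := by
          have := Real.rpow_nonneg ha (p-2)
          have h2 : (0:ℝ) ≤ (2:ℝ) ^ (p-2) := Real.rpow_nonneg (by norm_num) _
          nlinarith
  · calc (a+b) ^ (p-2) ≤ (2*a) ^ (p-2) := Real.rpow_le_rpow (by linarith) (by linarith) hq
      _ = 2 ^ (p-2) * a ^ (p-2) := Real.mul_rpow (by norm_num) ha
      _ ≤ 2 ^ (p-2) * (a ^ (p-2) + b ^ (p-2)) := by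
          have := Real.rpow_nonneg hb (p-2)
          have h2 : (0:ℝ) ≤ (2:ℝ) ^ (p-2) := Real.rpow_nonneg (by norm_num) _
          nlinarith

lemma pp_bound (hp : 2 ≤ p) : p*(p-1)*(2:ℝ) ^ (p-2)/2 ≤ 8 ^ p := by
  have hlog : 1 ≤ Real.log 4 := by
    rw [Real.le_log_iff_exp_le (by norm_num : (0:ℝ) < 4)]
    have := Real.exp_one_lt_d9
    linarith
  have hexp : ∀ t : ℝ, 0 ≤ t → t^2/4 ≤ Real.exp t := by
    intro t ht
    have h := Real.add_one_le_exp (t/2)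
    have e : Real.exp t = Real.exp (t/2) * Real.exp (t/2) := by
      rw [← Real.exp_add]; ring_nf
    nlinarith [h, Real.exp_pos (t/2)]
  have h4p : p^2/4 ≤ (4:ℝ) ^ p := by
    rw [Real.rpow_def_of_pos (by norm_num : (0:ℝ) < 4)]
    have h1 : p ≤ Real.log 4 * p := by nlinarith
    have h2 := hexp (Real.log 4 * p) (by nlinarith)
    nlinarith [h2]
  have e8 : (8:ℝ) ^ p = 2 ^ p * 4 ^ p := by
    rw [← Real.mul_rpow (by norm_num) (by norm_num)]; norm_num
  have e2 : (2:ℝ) ^ (p-2) = 2 ^ p / 4 := by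
    rw [Real.rpow_sub two_pos]; norm_num
  have h2p1 : (1:ℝ) ≤ 2 ^ p := by
    calc (1:ℝ) = 2 ^ (0:ℝ) := (Real.rpow_zero 2).symm
      _ ≤ 2 ^ p := Real.rpow_le_rpow_of_exponent_le one_le_two (by linarith)
  rw [e8, e2]
  have h2p0 : (0:ℝ) < 2 ^ p := by positivity
  nlinarith [mul_le_mul_of_nonneg_right h4p h2p0.le, h2p1, h2p0]

lemma upper_main (hp : 2 ≤ p) (x δ : ℝ) :
    |x + δ| ^ p - |x| ^ p - p * (x * |x| ^ (p-2)) * δ ≤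
      8 ^ p * (|x| ^ (p-2) * δ^2 + |δ| ^ p) := by
  rw [E_rep hp x δ]
  set M := |x| + |δ| with hM
  have hle : ∀ t ∈ Set.Icc (0:ℝ) 1,
      (p * ((x + t*δ) * |x + t*δ| ^ (p-2)) - p * (x * |x| ^ (p-2))) * δ ≤
        p*(p-1)*M ^ (p-2)*δ^2*t := by
    intro t ht
    have haM : |x + t*δ| ≤ M := by
      calc |x + t*δ| ≤ |x| + |t*δ| := abs_add_le _ _
        _ ≤ |x| + |δ| := by
            rw [abs_mul]
            have : |t| * |δ| ≤ 1 * |δ| := by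
              apply mul_le_mul_of_nonneg_right _ (abs_nonneg δ)
              rw [abs_of_nonneg ht.1]; exact ht.2
            linarith
    have hbM : |x| ≤ M := by
      have h := abs_nonneg δ
      simp only [hM]
      linarith
    rcases eq_or_lt_of_le ht.1 with h0 | h0
    · rw [← h0]; norm_num
    · have h9 := psi_diff_sq_le hp haM hbM (a := x + t*δ) (b := x)
      have h9' := mul_le_mul_of_nonneg_left h9 (show (0:ℝ) ≤ p by linarith)
      refine le_of_mul_le_mul_right ?_ h0
      nlinarith [h9']
  have hcont1 : Continuous fun t : ℝ => p*(p-1)*M ^ (p-2)*δ^2*t :=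
    continuous_const.mul continuous_id
  have hcont2 : Continuous fun t : ℝ =>
      (p * ((x + t*δ) * |x + t*δ| ^ (p-2)) - p * (x * |x| ^ (p-2))) * δ := by
    have hψ : Continuous fun t : ℝ => (x + t*δ) * |x + t*δ| ^ (p-2) :=
      (cont_psi (show (0:ℝ) ≤ p-2 by linarith)).comp
        (continuous_const.add (continuous_id.mul continuous_const))
    exact ((continuous_const.mul hψ).sub continuous_const).mul continuous_const
  have hIf : IntervalIntegrable (fun t : ℝ => p*(p-1)*M ^ (p-2)*δ^2*t)
      MeasureTheory.volume 0 1 := hcont1.intervalIntegrable 0 1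
  have hIg : IntervalIntegrable (fun t : ℝ =>
      (p * ((x + t*δ) * |x + t*δ| ^ (p-2)) - p * (x * |x| ^ (p-2))) * δ)
      MeasureTheory.volume 0 1 := hcont2.intervalIntegrable 0 1
  have hmono := intervalIntegral.integral_mono_on zero_le_one hIg hIf hle
  have hval : (∫ t in (0:ℝ)..1, p*(p-1)*M ^ (p-2)*δ^2*t)
      = p*(p-1)*M ^ (p-2)*δ^2*(1/2) := by
    rw [intervalIntegral.integral_const_mul, integral_id]
    norm_num
  rw [hval] at hmono
  refine hmono.trans ?_
  have hMle : M ^ (p-2) ≤ 2 ^ (p-2) * (|x| ^ (p-2) + |δ| ^ (p-2)) :=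
    rpow_two_add_le (by linarith) (abs_nonneg x) (abs_nonneg δ)
  have hS : |x| ^ (p-2) * δ^2 + |δ| ^ p = (|x| ^ (p-2) + |δ| ^ (p-2)) * δ^2 := by
    rw [abs_rpow_split hp δ]; ring
  have hpp := pp_bound hp
  have hSnn : 0 ≤ (|x| ^ (p-2) + |δ| ^ (p-2)) * δ^2 := by positivity
  calc p*(p-1)*M ^ (p-2)*δ^2*(1/2)
      ≤ p*(p-1)*(2 ^ (p-2) * (|x| ^ (p-2) + |δ| ^ (p-2)))*δ^2*(1/2) := by
        have hcoef : (0:ℝ) ≤ p*(p-1) := by nlinarith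
        nlinarith [mul_le_mul_of_nonneg_left hMle hcoef, sq_nonneg δ,
          mul_le_mul_of_nonneg_right (mul_le_mul_of_nonneg_left hMle hcoef) (sq_nonneg δ)]
    _ = (p*(p-1)*(2:ℝ) ^ (p-2)/2) * ((|x| ^ (p-2) + |δ| ^ (p-2)) * δ^2) := by ring
    _ ≤ 8 ^ p * ((|x| ^ (p-2) + |δ| ^ (p-2)) * δ^2) := mul_le_mul_of_nonneg_right hpp hSnn
    _ = 8 ^ p * (|x| ^ (p-2) * δ^2 + |δ| ^ p) := by rw [hS]

lemma lower_main (hp : 2 ≤ p) (x δ : ℝ) :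
    (1/4:ℝ) ^ p * (|x| ^ (p-2) * δ^2 + |δ| ^ p) ≤
      |x + δ| ^ p - |x| ^ p - p * (x * |x| ^ (p-2)) * δ := by
  rcases le_or_gt (2*|δ|) |x| with hc | hc
  · rcases lt_trichotomy x 0 with hx | hx | hx
    · have hc' : 2*|-δ| ≤ -x := by rw [abs_neg]; rw [abs_of_neg hx] at hc; linarith
      have h := lower_posA hp (show (0:ℝ) < -x by linarith) hc'
      rw [show (-x) + (-δ) = -(x+δ) by ring, abs_neg, abs_neg, abs_neg] at h
      have e : (-δ)^2 = δ^2 := by ring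
      rw [e] at h
      linarith [h]
    · subst hx
      have hδ0 : δ = 0 := by
        rw [abs_zero] at hc
        have := abs_nonneg δ
        have : |δ| = 0 := by linarith
        exact abs_eq_zero.mp this
      subst hδ0
      norm_num [Real.zero_rpow (show p ≠ 0 by linarith)]
    · rw [abs_of_pos hx] at hc
      exact lower_posA hp hx hc
  · refine le_trans ?_ (lower_B hp x δ)
    have h1 : |x| ^ (p-2) ≤ (2*|δ|) ^ (p-2) :=
      Real.rpow_le_rpow (abs_nonneg x) hc.le (by linarith)
    have h2 : (2*|δ|) ^ (p-2) = 2 ^ (p-2) * |δ| ^ (p-2) :=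
      Real.mul_rpow (by norm_num) (abs_nonneg δ)
    have e22 : (2:ℝ) ^ (p-2) = 2 ^ p / 4 := by
      rw [Real.rpow_sub two_pos]; norm_num
    have e21 : (2:ℝ) ^ (1-p) = 2 / 2 ^ p := by
      rw [Real.rpow_sub two_pos, Real.rpow_one]
    have equarter : ((1/4:ℝ)) ^ p = ((2:ℝ) ^ p)⁻¹ * ((2:ℝ) ^ p)⁻¹ := by
      rw [show (1/4:ℝ) = 2⁻¹ * 2⁻¹ by norm_num,
        Real.mul_rpow (by norm_num) (by norm_num), Real.inv_rpow (by norm_num)]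
    have h2p1 : (1:ℝ) ≤ 2 ^ p := by
      calc (1:ℝ) = 2 ^ (0:ℝ) := (Real.rpow_zero 2).symm
        _ ≤ 2 ^ p := Real.rpow_le_rpow_of_exponent_le one_le_two (by linarith)
    have h2p0 : (0:ℝ) < 2 ^ p := by positivity
    have hbound : |x| ^ (p-2) * δ^2 + |δ| ^ p ≤ (2 ^ p/4 + 1) * |δ| ^ p := by
      have hxδ : |x| ^ (p-2) * δ^2 ≤ (2 ^ p/4) * |δ| ^ p := by
        calc |x| ^ (p-2) * δ^2 ≤ (2*|δ|) ^ (p-2) * δ^2 :=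
            mul_le_mul_of_nonneg_right h1 (sq_nonneg δ)
          _ = 2 ^ (p-2) * (|δ| ^ (p-2) * δ^2) := by rw [h2]; ring
          _ = (2 ^ p/4) * |δ| ^ p := by rw [← abs_rpow_split hp δ, e22]
      linarith
    have hcoef : ((1/4:ℝ)) ^ p * (2 ^ p/4 + 1) ≤ 2 ^ (1-p) := by
      rw [equarter, e21]
      rw [show ((2:ℝ) ^ p)⁻¹ * ((2:ℝ) ^ p)⁻¹ * (2 ^ p/4 + 1) = (2 ^ p/4 + 1)/(2 ^ p * 2 ^ p) by ring,
        show (2:ℝ) / 2 ^ p = (2 * 2 ^ p)/(2 ^ p * 2 ^ p) by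
          rw [div_eq_div_iff (ne_of_gt h2p0) (by positivity)]; ring]
      rw [div_le_div_iff₀ (by positivity) (by positivity)]
      nlinarith [h2p1, h2p0]
    calc (1/4:ℝ) ^ p * (|x| ^ (p-2) * δ^2 + |δ| ^ p)
        ≤ (1/4:ℝ) ^ p * ((2 ^ p/4 + 1) * |δ| ^ p) := by
          apply mul_le_mul_of_nonneg_left hbound (by positivity)
      _ = ((1/4:ℝ) ^ p * (2 ^ p/4 + 1)) * |δ| ^ p := by ring
      _ ≤ 2 ^ (1-p) * |δ| ^ p :=
          mul_le_mul_of_nonneg_right hcoef (Real.rpow_nonneg (abs_nonneg δ) p)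

end W4

theorem stmt1 :
    ∃ c C : ℝ, 0 < c ∧ 0 < C ∧
      ∀ p : ℝ, 2 ≤ p → ∀ x δ : ℝ,
        c ^ p * (|x| ^ (p - 2) * δ ^ 2 + |δ| ^ p)
            ≤ |x + δ| ^ p - |x| ^ p - p * |x| ^ (p - 1) * Real.sign x * δ ∧
        |x + δ| ^ p - |x| ^ p - p * |x| ^ (p - 1) * Real.sign x * δ
            ≤ C ^ p * (|x| ^ (p - 2) * δ ^ 2 + |δ| ^ p) := by
  refine ⟨1/4, 8, by norm_num, by norm_num, fun p hp x δ => ?_⟩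
  have hsgn : p * |x| ^ (p - 1) * Real.sign x * δ = p * (x * |x| ^ (p-2)) * δ := by
    rcases lt_trichotomy x 0 with h | h | h
    · rw [Real.sign_of_neg h, abs_of_neg h, ← mul_self_rpow hp (show (0:ℝ) ≤ -x by linarith)]
      ring
    · subst h; simp
    · rw [Real.sign_of_pos h, abs_of_pos h, ← mul_self_rpow hp h.le]
      ring
  rw [hsgn]
  exact ⟨lower_main hp x δ, upper_main hp x δ⟩
end

section
/- Fix a finite set E, positive weights w⁺_e, w⁻_e, positive slacks s⁺_e, s⁻_e, and congestion values ρ⁺_e, ρ⁻_e with w⁺_e ρ⁺_e / s⁺_e and w⁻_e ρ⁻_e / s⁻_e arbitrary reals. Define the new slacks (s⁺_e)' = s⁺_e(1 − ρ⁺_e) > 0 and (s⁻_e)' = s⁻_e(1 − ρ⁻_e) > 0. Then (1/2)·Σ_e ((w⁺_e(ρ⁺_e)²/(s⁺_e)' − w⁻_e(ρ⁻_e)²/(s⁻_e)')²) / (w⁺_e/((s⁺_e)')² + w⁻_e/((s⁻_e)')²) ≤ (1/2)·Σ_e (w⁺_e (ρ⁺_e)⁴ + w⁻_e (ρ⁻_e)⁴).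 -/
lemma stmt5_key (a b A B : ℝ) (hA : 0 < A) (hB : 0 < B) :
    (a - b) ^ 2 / (A + B) ≤ a ^ 2 / A + b ^ 2 / B := by
  rw [div_add_div _ _ hA.ne' hB.ne', div_le_div_iff₀ (by positivity) (by positivity)]
  nlinarith [sq_nonneg (a * B + b * A), sq_nonneg (a * B - b * A), mul_pos hA hB]

theorem stmt5 {ι : Type*} [Fintype ι] (wp wm sp sm ρp ρm sp' sm' : ι → ℝ)
    (hwp : ∀ e, 0 < wp e) (hwm : ∀ e, 0 < wm e)
    (hsp : ∀ e, 0 < sp e) (hsm : ∀ e, 0 < sm e)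
    (hsp' : ∀ e, sp' e = sp e * (1 - ρp e)) (hsm' : ∀ e, sm' e = sm e * (1 - ρm e))
    (hsp'pos : ∀ e, 0 < sp' e) (hsm'pos : ∀ e, 0 < sm' e) :
    (1 / 2) * ∑ e, (wp e * (ρp e) ^ 2 / sp' e - wm e * (ρm e) ^ 2 / sm' e) ^ 2
        / (wp e / (sp' e) ^ 2 + wm e / (sm' e) ^ 2)
      ≤ (1 / 2) * ∑ e, (wp e * (ρp e) ^ 4 + wm e * (ρm e) ^ 4) := by
  gcongr with e
  have h1 := hwp e
  have h2 := hwm e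
  have h3 := hsp'pos e
  have h4 := hsm'pos e
  have hA : 0 < wp e / (sp' e) ^ 2 := by positivity
  have hB : 0 < wm e / (sm' e) ^ 2 := by positivity
  calc (wp e * (ρp e) ^ 2 / sp' e - wm e * (ρm e) ^ 2 / sm' e) ^ 2
        / (wp e / (sp' e) ^ 2 + wm e / (sm' e) ^ 2)
      ≤ (wp e * (ρp e) ^ 2 / sp' e) ^ 2 / (wp e / (sp' e) ^ 2)
        + (wm e * (ρm e) ^ 2 / sm' e) ^ 2 / (wm e / (sm' e) ^ 2) :=
        stmt5_key _ _ _ _ hA hB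
    _ = wp e * (ρp e) ^ 4 + wm e * (ρm e) ^ 4 := by
        field_simp
end

section
/- Let 𝓧 ⊆ ℝ^m be a linear subspace, h, k : 𝓧 → ℝ convex twice-differentiable functions, x ∈ 𝓧, and x* ∈ 𝓧 a minimizer of h. Suppose k(cδ) ≤ c²k(δ) for all c ∈ ℝ, δ ∈ 𝓧, and that k(δ) ≤ h(x+δ) − h(x) − ⟨∇h(x), δ⟩ ≤ β·k(δ) for all δ ∈ 𝓧, where β ≥ 1. Let δ* = argmin_{δ ∈ 𝓧} ⟨∇h(x), δ⟩ + k(δ), and suppose δ# ∈ 𝓧 satisfies ⟨∇h(x), δ#⟩ + k(δ#) ≤ (1/γ)(⟨∇h(x), δ*⟩ + k(δ*)) + ε with γ ≥ 1, ε ≥ 0. Then h(x) − h(x + δ#/β) ≥ (1/(βγ))·(h(x) − h(x*)) − ε/β. -/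
theorem stmt9 {m : ℕ} (X : Submodule ℝ (EuclideanSpace ℝ (Fin m)))
    (h k : EuclideanSpace ℝ (Fin m) → ℝ)
    (hh : ContDiff ℝ 2 h) (hk : ContDiff ℝ 2 k)
    (hhconv : ConvexOn ℝ (X : Set (EuclideanSpace ℝ (Fin m))) h)
    (hkconv : ConvexOn ℝ (X : Set (EuclideanSpace ℝ (Fin m))) k)
    (x xstar : EuclideanSpace ℝ (Fin m)) (hx : x ∈ X) (hxstar : xstar ∈ X)
    (hmin : ∀ z ∈ X, h xstar ≤ h z)
    (β γ ε : ℝ) (hβ : 1 ≤ β) (hγ : 1 ≤ γ) (hε : 0 ≤ ε)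
    (hkhom : ∀ (c : ℝ) (δ : EuclideanSpace ℝ (Fin m)), δ ∈ X → k (c • δ) ≤ c ^ 2 * k δ)
    (hsand : ∀ δ ∈ X,
      k δ ≤ h (x + δ) - h x - fderiv ℝ h x δ ∧
      h (x + δ) - h x - fderiv ℝ h x δ ≤ β * k δ)
    (δstar : EuclideanSpace ℝ (Fin m)) (hδstar : δstar ∈ X)
    (hδstarmin : ∀ δ ∈ X, fderiv ℝ h x δstar + k δstar ≤ fderiv ℝ h x δ + k δ)
    (δsharp : EuclideanSpace ℝ (Fin m)) (hδsharp : δsharp ∈ X)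
    (happrox : fderiv ℝ h x δsharp + k δsharp
      ≤ (1 / γ) * (fderiv ℝ h x δstar + k δstar) + ε) :
    (1 / (β * γ)) * (h x - h xstar) - ε / β ≤ h x - h (x + (1 / β) • δsharp) := by

  have hβ0 : (0:ℝ) < β := lt_of_lt_of_le one_pos hβ
  have hγ0 : (0:ℝ) < γ := lt_of_lt_of_le one_pos hγ
  have hmem1 : (1/β) • δsharp ∈ X := X.smul_mem _ hδsharp
  have hmem2 : xstar - x ∈ X := X.sub_mem hxstar hx
  have hglin : fderiv ℝ h x ((1/β) • δsharp) = (1/β) * fderiv ℝ h x δsharp :=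
    (fderiv ℝ h x).map_smul _ _
  have h1 := (hsand _ hmem1).2
  have h2 : k ((1/β) • δsharp) ≤ (1/β)^2 * k δsharp := hkhom _ _ hδsharp
  have h3 : fderiv ℝ h x δstar + k δstar ≤ h xstar - h x := by
    have h4 := hδstarmin _ hmem2
    have h5 := (hsand _ hmem2).1
    have h6 : x + (xstar - x) = xstar := by abel
    rw [h6] at h5
    linarith
  have h5 : h xstar - h x ≤ 0 := by linarith [hmin x hx]
  have hβγ : 1/(β*γ) = (1/β)*(1/γ) := by
    field_simp
  have key : h (x + (1/β) • δsharp) - h x ≤ (1/β) * ((1/γ) * (h xstar - h x) + ε) := by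
    have e1 : h (x + (1/β) • δsharp) - h x ≤ (1/β) * (fderiv ℝ h x δsharp + k δsharp) := by
      have e2 : β * k ((1/β) • δsharp) ≤ β * ((1/β)^2 * k δsharp) := by
        exact mul_le_mul_of_nonneg_left h2 (le_of_lt hβ0)
      have e3 : β * ((1/β)^2 * k δsharp) = (1/β) * k δsharp := by
        field_simp
      rw [hglin] at h1
      linarith
    have e4 : (1/γ) * (fderiv ℝ h x δstar + k δstar) ≤ (1/γ) * (h xstar - h x) :=
      mul_le_mul_of_nonneg_left h3 (by positivity)
    have e5 : fderiv ℝ h x δsharp + k δsharp ≤ (1/γ) * (h xstar - h x) + ε := by linarith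
    calc h (x + (1/β) • δsharp) - h x ≤ (1/β) * (fderiv ℝ h x δsharp + k δsharp) := e1
      _ ≤ (1/β) * ((1/γ) * (h xstar - h x) + ε) :=
        mul_le_mul_of_nonneg_left e5 (by positivity)
  rw [hβγ]
  have : ε / β = (1/β) * ε := by ring
  nlinarith [key]
end

section
/- Let θ ∈ (0,1) and let log̃ be the quadratic extension of log with parameter θ (agreeing with log(1+t) on [−θ,θ] and extended quadratically outside). Then for all a > 0 and all x ∈ ℝ there exists α ∈ [(1+θ)^{-2}, (1−θ)^{-2}] such that (d/dx) log̃(1 + x/a) = 1/a − α·x/a². -/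
/-- The quadratic extension `log̃(1+t)` of the logarithm outside `[-θ, θ]`. -/
noncomputable def logTilde (θ t : ℝ) : ℝ :=
  if θ < t then
    Real.log (1 + θ) + (t - θ) / (1 + θ) - (t - θ) ^ 2 / (2 * (1 + θ) ^ 2)
  else if t < -θ then
    Real.log (1 - θ) + (t + θ) / (1 - θ) - (t + θ) ^ 2 / (2 * (1 - θ) ^ 2)
  else
    Real.log (1 + t)

/-- derivative of the shifted log -/
lemma hasDerivAt_log1p (t : ℝ) (ht : -1 < t) :
    HasDerivAt (fun s : ℝ => Real.log (1 + s)) (1 / (1 + t)) t := by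
  have h1 : HasDerivAt (fun s : ℝ => 1 + s) 1 t := (hasDerivAt_id t).const_add 1
  have h2 := (Real.hasDerivAt_log (by linarith : (1:ℝ) + t ≠ 0)).comp t h1
  exact h2.congr_deriv (by simp [one_div])

/-- derivative of the quadratic pieces -/
lemma hasDerivAt_quad (c b : ℝ) (hb : b ≠ 0) (t : ℝ) :
    HasDerivAt (fun s : ℝ => Real.log b + (s - c) / b - (s - c) ^ 2 / (2 * b ^ 2))
      (1 / b - (t - c) / b ^ 2) t := by
  have h0 : HasDerivAt (fun s : ℝ => s - c) 1 t := (hasDerivAt_id t).sub_const c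
  have h1 := (h0.div_const b).const_add (Real.log b)
  have h2 := (h0.pow 2).div_const (2 * b ^ 2)
  refine (h1.sub h2).congr_deriv ?_
  field_simp
  ring

lemma hasDerivAt_logTilde (θ : ℝ) (hθ0 : 0 < θ) (hθ1 : θ < 1) (t : ℝ) :
    HasDerivAt (logTilde θ)
      (if θ < t then 1 / (1 + θ) - (t - θ) / (1 + θ) ^ 2
       else if t < -θ then 1 / (1 - θ) - (t + θ) / (1 - θ) ^ 2
       else 1 / (1 + t)) t := by
  have hp : (1 : ℝ) + θ ≠ 0 := by linarith
  have hm : (1 : ℝ) - θ ≠ 0 := by linarith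
  rcases lt_trichotomy θ t with h | h | h
  · rw [if_pos h]
    refine (hasDerivAt_quad θ (1 + θ) hp t).congr_of_eventuallyEq ?_
    filter_upwards [Ioi_mem_nhds h] with s hs
    rw [logTilde, if_pos (show θ < s from hs)]
  · -- t = θ : junction
    subst h
    rw [if_neg (lt_irrefl θ), if_neg (by linarith)]
    have hleft : HasDerivWithinAt (logTilde θ) (1 / (1 + θ)) (Set.Iic θ) θ := by
      refine ((hasDerivAt_log1p θ (by linarith)).hasDerivWithinAt).congr_of_eventuallyEq
        ?_ ?_
      · filter_upwards [nhdsWithin_le_nhds (Ioi_mem_nhds (by linarith : -θ < θ)),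
          self_mem_nhdsWithin] with s hs1 hs2
        rw [logTilde, if_neg (not_lt.2 (Set.mem_Iic.1 hs2)),
          if_neg (not_lt.2 (le_of_lt (Set.mem_Ioi.1 hs1)))]
      · rw [logTilde, if_neg (lt_irrefl θ), if_neg (by linarith)]
    have hright : HasDerivWithinAt (logTilde θ) (1 / (1 + θ)) (Set.Ici θ) θ := by
      have hq := (hasDerivAt_quad θ (1 + θ) hp θ).hasDerivWithinAt (s := Set.Ici θ)
      have hq' : HasDerivWithinAt
          (fun s : ℝ => Real.log (1 + θ) + (s - θ) / (1 + θ) - (s - θ) ^ 2 / (2 * (1 + θ) ^ 2))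
          (1 / (1 + θ)) (Set.Ici θ) θ := by
        exact hq.congr_deriv (by simp)
      refine hq'.congr_of_eventuallyEq ?_ ?_
      · filter_upwards [self_mem_nhdsWithin] with s hs
        rcases eq_or_lt_of_le (Set.mem_Ici.1 hs) with h | h
        · rw [← h, logTilde, if_neg (lt_irrefl θ), if_neg (by linarith)]
          simp
        · rw [logTilde, if_pos h]
      · rw [logTilde, if_neg (lt_irrefl θ), if_neg (by linarith)]
        simp
    have := hleft.union hright
    rwa [Set.Iic_union_Ici, hasDerivWithinAt_univ] at this
  · -- t < θ
    rw [if_neg (not_lt.2 h.le)]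
    rcases lt_trichotomy t (-θ) with h2 | h2 | h2
    · rw [if_pos h2]
      have hq : HasDerivAt (fun s : ℝ => Real.log (1 - θ) + (s + θ) / (1 - θ) -
          (s + θ) ^ 2 / (2 * (1 - θ) ^ 2)) (1 / (1 - θ) - (t + θ) / (1 - θ) ^ 2) t := by
        have := hasDerivAt_quad (-θ) (1 - θ) hm t
        simpa [sub_neg_eq_add, sub_eq_add_neg] using this
      refine hq.congr_of_eventuallyEq ?_
      filter_upwards [Iio_mem_nhds h2] with s hs
      have hs' : s < -θ := hs
      rw [logTilde, if_neg (by linarith : ¬ θ < s), if_pos hs']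
    · -- t = -θ : junction
      subst h2
      rw [if_neg (lt_irrefl _), show (1:ℝ) + -θ = 1 - θ from by ring]
      have hleft : HasDerivWithinAt (logTilde θ) (1 / (1 - θ)) (Set.Iic (-θ)) (-θ) := by
        have hq2 : HasDerivAt (fun s : ℝ => Real.log (1 - θ) + (s + θ) / (1 - θ) -
            (s + θ) ^ 2 / (2 * (1 - θ) ^ 2)) (1 / (1 - θ)) (-θ) := by
          have hq := hasDerivAt_quad (-θ) (1 - θ) hm (-θ)
          have h' : (1 : ℝ) / (1 - θ) - (-θ - -θ) / (1 - θ) ^ 2 = 1 / (1 - θ) := by simp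
          rw [← h']
          simpa [sub_neg_eq_add, sub_eq_add_neg] using hq
        refine hq2.hasDerivWithinAt.congr_of_eventuallyEq ?_ ?_
        · filter_upwards [self_mem_nhdsWithin] with s hs
          rcases eq_or_lt_of_le (Set.mem_Iic.1 hs) with h | h
          · rw [h, logTilde, if_neg (by linarith), if_neg (lt_irrefl _)]
            rw [show (1:ℝ) + -θ = 1 - θ from by ring]
            simp
          · rw [logTilde, if_neg (by linarith), if_pos h]
        · rw [logTilde, if_neg (by linarith), if_neg (lt_irrefl _)]
          rw [show (1:ℝ) + -θ = 1 - θ from by ring]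
          simp
      have hright : HasDerivWithinAt (logTilde θ) (1 / (1 - θ)) (Set.Ici (-θ)) (-θ) := by
        have hl : HasDerivAt (fun s : ℝ => Real.log (1 + s)) (1 / (1 - θ)) (-θ) := by
          have := hasDerivAt_log1p (-θ) (by linarith)
          rwa [show (1:ℝ) + -θ = 1 - θ from by ring] at this
        refine hl.hasDerivWithinAt.congr_of_eventuallyEq ?_ ?_
        · filter_upwards [nhdsWithin_le_nhds (Iio_mem_nhds (by linarith : -θ < θ)),
            self_mem_nhdsWithin] with s hs1 hs2
          rw [logTilde, if_neg (not_lt.2 (le_of_lt (Set.mem_Iio.1 hs1))),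
            if_neg (not_lt.2 (Set.mem_Ici.1 hs2))]
        · rw [logTilde, if_neg (by linarith), if_neg (lt_irrefl _)]
      have := hleft.union hright
      rwa [Set.Iic_union_Ici, hasDerivWithinAt_univ] at this
    · -- -θ < t < θ
      rw [if_neg (not_lt.2 h2.le)]
      refine (hasDerivAt_log1p t (by linarith)).congr_of_eventuallyEq ?_
      filter_upwards [Ioo_mem_nhds h2 h] with s hs
      rw [logTilde, if_neg (not_lt.2 hs.2.le), if_neg (not_lt.2 hs.1.le)]

theorem stmt12 (θ : ℝ) (hθ : θ ∈ Set.Ioo (0 : ℝ) 1) (a : ℝ) (ha : 0 < a) (x : ℝ) :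
    ∃ α ∈ Set.Icc (1 / (1 + θ) ^ 2) (1 / (1 - θ) ^ 2),
      deriv (fun x : ℝ => logTilde θ (x / a)) x = 1 / a - α * x / a ^ 2 := by
  obtain ⟨hθ0, hθ1⟩ := hθ
  have hp : (0 : ℝ) < 1 + θ := by linarith
  have hm : (0 : ℝ) < 1 - θ := by linarith
  have ha' : a ≠ 0 := ne_of_gt ha
  set t : ℝ := x / a with ht
  have hx : t * a = x := by rw [ht]; field_simp
  have hdiv : HasDerivAt (fun x : ℝ => x / a) (1 / a) x := by
    simpa using (hasDerivAt_id x).div_const a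
  have hD := hasDerivAt_logTilde θ hθ0 hθ1 t
  have hcomp := hD.comp x hdiv
  have hderiv : deriv (fun x : ℝ => logTilde θ (x / a)) x =
      (if θ < t then 1 / (1 + θ) - (t - θ) / (1 + θ) ^ 2
       else if t < -θ then 1 / (1 - θ) - (t + θ) / (1 - θ) ^ 2
       else 1 / (1 + t)) * (1 / a) := hcomp.deriv
  rcases lt_trichotomy θ t with h | h | h
  · -- t > θ
    have ht0 : 0 < t := lt_trans hθ0 h
    have hden : 0 < t * (1 + θ) ^ 2 := by positivity
    refine ⟨(θ ^ 2 + t) / (t * (1 + θ) ^ 2), ⟨?_, ?_⟩, ?_⟩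
    · rw [div_le_div_iff₀ (by positivity) hden]
      nlinarith [sq_nonneg θ, sq_nonneg (1 + θ)]
    · rw [div_le_div_iff₀ hden (by positivity)]
      nlinarith [mul_pos hθ0 (sub_pos.2 h), sq_nonneg (1 - θ), mul_pos ht0 hθ0,
        mul_pos (mul_pos ht0 hθ0) hθ0]
    · rw [hderiv, if_pos h, ← hx]
      field_simp
      ring
  · -- t = θ
    refine ⟨1 / (1 + θ), ⟨?_, ?_⟩, ?_⟩
    · rw [div_le_div_iff₀ (by positivity) (by positivity)]
      nlinarith
    · rw [div_le_div_iff₀ (by positivity) (by positivity)]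
      nlinarith
    · rw [hderiv, if_neg (by rw [← h]; exact lt_irrefl θ), if_neg (by rw [← h]; linarith),
        ← hx, ← h]
      field_simp
      ring
  · rcases lt_trichotomy t (-θ) with h2 | h2 | h2
    · -- t < -θ
      have htneg : t < 0 := by linarith
      have hu : (0:ℝ) < -t := by linarith
      have hnum : (0:ℝ) < -θ ^ 2 - t := by nlinarith
      have hden : (0:ℝ) < -t * (1 - θ) ^ 2 := by positivity
      refine ⟨(-θ ^ 2 - t) / (-t * (1 - θ) ^ 2), ⟨?_, ?_⟩, ?_⟩
      · rw [div_le_div_iff₀ (by positivity) hden]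
        nlinarith [mul_pos hθ0 (show (0:ℝ) < -t - θ by linarith),
          mul_pos (mul_pos hθ0 hθ0) (show (0:ℝ) < (1 - θ) * (3 + θ) by nlinarith)]
      · rw [div_le_div_iff₀ hden (by positivity)]
        nlinarith [sq_nonneg θ, sq_nonneg (1 - θ)]
      · rw [hderiv, if_neg (not_lt.2 h.le), if_pos h2, ← hx]
        have hts : t ≠ 0 := ne_of_lt htneg
        field_simp
        ring
    · -- t = -θ
      refine ⟨1 / (1 - θ), ⟨?_, ?_⟩, ?_⟩
      · rw [div_le_div_iff₀ (by positivity) (by positivity)]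
        nlinarith
      · rw [div_le_div_iff₀ (by positivity) (by positivity)]
        nlinarith
      · rw [hderiv, if_neg (not_lt.2 h.le), if_neg (by rw [h2]; exact lt_irrefl _), ← hx, h2]
        rw [show (1:ℝ) + -θ = 1 - θ from by ring]
        field_simp
        ring
    · -- -θ < t < θ
      have h1t : (0 : ℝ) < 1 + t := by linarith
      refine ⟨1 / (1 + t), ⟨?_, ?_⟩, ?_⟩
      · rw [div_le_div_iff₀ (by positivity) (by positivity)]
        nlinarith
      · rw [div_le_div_iff₀ (by positivity) (by positivity)]
        nlinarith
      · rw [hderiv, if_neg (not_lt.2 h.le), if_neg (not_lt.2 h2.le), ← hx]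
        field_simp
        ring
end

section
/- Let s⁺, s⁻ ∈ (0,1) with s⁺ + s⁻ = 1 and s⁺ ≤ s⁻ (so s⁻ ≥ 1/2). Let w⁺, w⁻, δ, γ, W > 0 with w⁺ ≤ δ·W, w⁻ ≤ δ·W, and δ²·W ≤ γ. Let f̃ ∈ ℝ with ρ⁺ = f̃/s⁺, ρ⁻ = −f̃/s⁻, and suppose |w⁺ρ⁺/s⁺| + |w⁻ρ⁻/s⁻| ≤ w⁺δ/s⁺ + w⁻δ/s⁻ + γ. If |ρ⁺| ≥ 2δ then |w⁺ρ⁺/s⁺| + |w⁻ρ⁻/s⁻| ≤ 6γ. -/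
theorem stmt13 (sp sm wp wm δ γ W : ℝ) (ftil ρp ρm : ℝ)
    (hsp : sp ∈ Set.Ioo (0 : ℝ) 1) (hsm : sm ∈ Set.Ioo (0 : ℝ) 1)
    (hsum : sp + sm = 1) (hle : sp ≤ sm)
    (hwp : 0 < wp) (hwm : 0 < wm) (hδ : 0 < δ) (hγ : 0 < γ) (hW : 0 < W)
    (hwpW : wp ≤ δ * W) (hwmW : wm ≤ δ * W) (hγW : δ ^ 2 * W ≤ γ)
    (hρp : ρp = ftil / sp) (hρm : ρm = -ftil / sm)
    (hstretch : |wp * ρp / sp| + |wm * ρm / sm| ≤ wp * δ / sp + wm * δ / sm + γ)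
    (hbig : 2 * δ ≤ |ρp|) :
    |wp * ρp / sp| + |wm * ρm / sm| ≤ 6 * γ := by
  obtain ⟨hsp0, hsp1⟩ := hsp
  obtain ⟨hsm0, hsm1⟩ := hsm
  have hsm2 : (1:ℝ)/2 ≤ sm := by linarith
  have habs : |wp * ρp / sp| = wp * |ρp| / sp := by
    rw [abs_div, abs_mul, abs_of_pos hwp, abs_of_pos hsp0]
  have h1 : wp * δ / sp ≤ |wp * ρp / sp| / 2 := by
    rw [habs]
    have hd : δ ≤ |ρp| / 2 := by linarith
    calc wp * δ / sp ≤ wp * (|ρp| / 2) / sp := by gcongr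
      _ = wp * |ρp| / sp / 2 := by ring
  have h2 : wm * δ / sm ≤ 2 * γ := by
    have hwmδ : wm * δ ≤ γ := by nlinarith
    rw [div_le_iff₀ hsm0]
    nlinarith
  have h3 : (0:ℝ) ≤ |wm * ρm / sm| := abs_nonneg _
  linarith
end
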